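/- Every semiprime Lie algebra L admits an embedding into a product ∏_{α∈Λ} L/I_α where each quotient L/I_α is a prime Lie algebra; i.e., in a semiprime Lie algebra the zero ideal is an intersection of ideals I_α with L/I_α prime, and the diagonal map L → ∏_α L/I_α is injective. -/

import Mathlib

universe u v

/-- A Lie algebra is prime if the bracket of any two nonzero ideals is nonzero. -/
def IsPrimeLie (k : Type u) (L : Type v) [CommRing k] [LieRing L] [LieAlgebra k L] : Prop :=
  ∀ I J : LieIdeal k L, I ≠ ⊥ → J ≠ ⊥ → ⁅I, J⁆ ≠ ⊥

/-- A Lie algebra is semiprime if the bracket of any nonzero ideal with itself is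
nonzero. -/
def IsSemiprimeLie (k : Type u) (L : Type v) [CommRing k] [LieRing L] [LieAlgebra k L] :
    Prop :=
  ∀ I : LieIdeal k L, I ≠ ⊥ → ⁅I, I⁆ ≠ ⊥

section Aux

variable {k : Type u} {L : Type v} [CommRing k] [LieRing L] [LieAlgebra k L]

/-- The quotient map `L → L ⧸ P` as a morphism of Lie algebras. -/
def lieQuotHom (P : LieIdeal k L) : L →ₗ⁅k⁆ L ⧸ P :=
  { (P : Submodule k L).mkQ with
    map_lie' := fun {_ _} => rfl }

theorem lieQuotHom_apply (P : LieIdeal k L) (x : L) :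
    lieQuotHom P x = LieSubmodule.Quotient.mk (N := P) x := rfl

theorem lieQuotHom_surjective (P : LieIdeal k L) : Function.Surjective (lieQuotHom P) :=
  Quot.mk_surjective

theorem mem_comap_bot_lieQuotHom (P : LieIdeal k L) (x : L) :
    x ∈ LieIdeal.comap (lieQuotHom P) ⊥ ↔ x ∈ P := by
  rw [LieIdeal.mem_comap, LieSubmodule.mem_bot, lieQuotHom_apply,
    LieSubmodule.Quotient.mk_eq_zero']

/-- In a semiprime Lie algebra, every nonzero element avoids some ideal with prime
quotient. -/
theorem exists_prime_quotient_avoiding (hsemi : IsSemiprimeLie k L) {x : L} (hx : x ≠ 0) :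
    ∃ P : LieIdeal k L, IsPrimeLie k (L ⧸ P) ∧ x ∉ P := by
  classical
  -- step function producing a nonzero element of `⁅⟨a⟩, ⟨a⟩⁆` from a nonzero `a`
  have step : ∀ a : {y : L // y ≠ 0}, ∃ b : {y : L // y ≠ 0},
      (b : L) ∈ ⁅(LieSubmodule.lieSpan k L {(a : L)} : LieIdeal k L),
        (LieSubmodule.lieSpan k L {(a : L)} : LieIdeal k L)⁆ := by
    rintro ⟨a, ha⟩
    have hA : (LieSubmodule.lieSpan k L {a} : LieIdeal k L) ≠ ⊥ := by
      rw [Ne, LieSubmodule.lieSpan_eq_bot_iff]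
      push_neg
      exact ⟨a, rfl, ha⟩
    have hbr := hsemi _ hA
    rw [Ne, LieSubmodule.eq_bot_iff] at hbr
    push_neg at hbr
    obtain ⟨b, hb, hb0⟩ := hbr
    exact ⟨⟨b, hb0⟩, hb⟩
  choose F hF using step
  set seq : ℕ → {y : L // y ≠ 0} := fun n => F^[n] ⟨x, hx⟩ with hseq
  have hseq_succ : ∀ n, seq (n + 1) = F (seq n) := fun n =>
    Function.iterate_succ_apply' F n ⟨x, hx⟩
  -- the ideals generated by the sequence elements
  set A : ℕ → LieIdeal k L := fun n => LieSubmodule.lieSpan k L {(seq n : L)} with hA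
  have hmemA : ∀ n, (seq n : L) ∈ A n := fun n =>
    LieSubmodule.subset_lieSpan (R := k) (L := L) rfl
  have hstep : ∀ n, (seq (n + 1) : L) ∈ ⁅A n, A n⁆ := fun n => by
    rw [hseq_succ n]; exact hF (seq n)
  have hAle : ∀ n, A (n + 1) ≤ A n := fun n => by
    rw [hA]
    apply LieSubmodule.lieSpan_le.mpr
    rintro y hy
    rw [Set.mem_singleton_iff] at hy
    subst hy
    exact (LieSubmodule.lie_le_right (A n) (A n)) (hstep n)
  have hAmono : ∀ {m n : ℕ}, m ≤ n → A n ≤ A m := by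
    intro m n hmn
    induction n with
    | zero => cases Nat.le_zero.mp hmn; exact le_rfl
    | succ n ih =>
      rcases Nat.lt_or_ge m (n + 1) with h | h
      · exact le_trans (hAle n) (ih (Nat.lt_succ_iff.mp h))
      · cases le_antisymm hmn h; exact le_rfl
  -- Zorn: a maximal ideal avoiding all `seq n`
  set S : Set (LieIdeal k L) := {Q | ∀ n, (seq n : L) ∉ Q} with hS
  have hbot : (⊥ : LieIdeal k L) ∈ S := fun n h =>
    (seq n).2 ((LieSubmodule.mem_bot (R := k) _).mp h)
  obtain ⟨P, -, hPS, hPmax⟩ :=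
    zorn_le_nonempty₀ S (fun c hcS hc y hy => by
      refine ⟨sSup c, fun n hn => ?_, fun z hz => le_sSup hz⟩
      have hne : c.Nonempty := ⟨y, hy⟩
      have hdir : DirectedOn (· ≤ ·) (LieSubmodule.toSubmodule '' c) := by
        rintro _ ⟨p, hp, rfl⟩ _ ⟨q, hq, rfl⟩
        rcases hc.total hp hq with h | h
        · exact ⟨_, ⟨q, hq, rfl⟩, h, le_rfl⟩
        · exact ⟨_, ⟨p, hp, rfl⟩, le_rfl, h⟩
      have : (seq n : L) ∈ (sSup c : LieIdeal k L).toSubmodule := hn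
      rw [LieSubmodule.sSup_toSubmodule] at this
      obtain ⟨_, ⟨Q, hQ, rfl⟩, hmem⟩ :=
        (Submodule.mem_sSup_of_directed (hne.image _) hdir).mp this
      exact hcS hQ n hmem) ⊥ hbot
  refine ⟨P, ?_, fun hxP => hPS 0 hxP⟩
  -- the quotient is prime
  intro I' J' hI' hJ' hbr
  set π := lieQuotHom P with hπ
  have hcomap_ne : ∀ {K' : LieIdeal k (L ⧸ P)}, K' ≠ ⊥ →
      ∃ n, (seq n : L) ∈ LieIdeal.comap π K' := by
    intro K' hK'
    have hPle : P ≤ LieIdeal.comap π K' := fun z hz => by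
      rw [LieIdeal.mem_comap]
      have : π z = 0 := by
        rw [hπ, lieQuotHom_apply, LieSubmodule.Quotient.mk_eq_zero']; exact hz
      rw [this]; exact K'.zero_mem
    by_contra hnone
    push_neg at hnone
    have hmem : LieIdeal.comap π K' ∈ S := fun n => hnone n
    have := hPmax hmem hPle
    have hEq : LieIdeal.comap π K' = P := le_antisymm this hPle
    apply hK'
    have hmc : LieIdeal.map π (LieIdeal.comap π K') = K' := by
      rw [LieIdeal.map_comap_eq ((lieQuotHom P).isIdealMorphism_of_surjective
        (lieQuotHom_surjective P)),
        LieHom.idealRange_eq_top_of_surjective _ (lieQuotHom_surjective P), top_inf_eq]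
    rw [← hmc, hEq, LieSubmodule.eq_bot_iff]
    intro m hm
    obtain ⟨⟨z, hz⟩, rfl⟩ := LieIdeal.mem_map_of_surjective (lieQuotHom_surjective P) hm
    rw [lieQuotHom_apply, LieSubmodule.Quotient.mk_eq_zero']
    exact hz
  obtain ⟨n, hn⟩ := hcomap_ne hI'
  obtain ⟨m, hm⟩ := hcomap_ne hJ'
  set N := max n m with hN
  have h1 : A N ≤ LieIdeal.comap π I' :=
    le_trans (hAmono (le_max_left n m)) (by
      rw [hA]
      exact LieSubmodule.lieSpan_le.mpr (by rintro y rfl; exact hn))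
  have h2 : A N ≤ LieIdeal.comap π J' :=
    le_trans (hAmono (le_max_right n m)) (by
      rw [hA]
      exact LieSubmodule.lieSpan_le.mpr (by rintro y rfl; exact hm))
  have hkey : (seq (N + 1) : L) ∈ ⁅LieIdeal.comap π I', LieIdeal.comap π J'⁆ :=
    LieSubmodule.mono_lie h1 h2 (hstep N)
  have : (seq (N + 1) : L) ∈ LieIdeal.comap π ⁅I', J'⁆ :=
    LieIdeal.comap_bracket_le π hkey
  rw [hbr, mem_comap_bot_lieQuotHom] at this
  exact hPS (N + 1) this

end Aux

/-- in a semiprime Lie algebra the zero ideal is an intersection of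
ideals `I_α` with prime quotients `L/I_α`; equivalently, the diagonal map
`L → ∏_α L/I_α` is injective. -/
theorem semiprime_embeds_in_product_of_primes (k : Type u) (L : Type v) [Field k]
    [LieRing L] [LieAlgebra k L] (hsemi : IsSemiprimeLie k L) :
    ∃ (Λ : Type (max u v)) (I : Λ → LieIdeal k L),
      (∀ α : Λ, IsPrimeLie k (L ⧸ I α)) ∧
      ∀ x : L, (∀ α : Λ, (LieSubmodule.Quotient.mk (N := I α) x : L ⧸ I α) = 0) → x = 0 := by
  refine ⟨ULift.{u} {P : LieIdeal k L // IsPrimeLie k (L ⧸ P)}, fun α => α.down.1,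
    fun α => α.down.2, fun x hx => ?_⟩
  by_contra hx0
  obtain ⟨P, hP, hxP⟩ := exists_prime_quotient_avoiding hsemi hx0
  exact hxP (by
    have := hx ⟨⟨P, hP⟩⟩
    rwa [LieSubmodule.Quotient.mk_eq_zero'] at this)
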